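/- Let f : U → ℝ be C¹ on open U ⊂ ℝ^d, Φ : U → ℝⁿ, φ : U → ℝ^{d−n+1} C¹, and define W¹(Φ, φ)(y) := ⟨D₁Φ(y), Φ(y)⟩ where ⟨D₁Φ(y), z⟩ = det [[0, ∂_yφ(y)],[z, ∂_yΦ(y)]] (a square (d+1)×(d+1) determinant with z ∈ ℝⁿ a column and ∂_yφ of size (d−n+1)×d). Then W¹(fΦ, φ)(y) = f(y)ⁿ · W¹(Φ, φ)(y) for all y ∈ U. -/

import Mathlib

open Matrix in
lemma key_det {ι : Type*} [DecidableEq ι] [Fintype ι] (M : Matrix ι ι ℝ) (i₀ : ι)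
    (a : ℝ) (s w : ι → ℝ) (hw : w i₀ = 0)
    (hs : ∀ r, s r * M r i₀ = a * M r i₀) :
    (Matrix.of fun r c => s r * M r c + M r i₀ * w c).det = (∏ r, s r) * M.det := by
  rcases eq_or_ne a 0 with ha | ha
  · subst ha
    have hz : ∀ r, s r * M r i₀ = 0 := by simpa using hs
    have hL : (Matrix.of fun r c => s r * M r c + M r i₀ * w c).det = 0 := by
      apply Matrix.det_eq_zero_of_column_eq_zero i₀
      intro r; simp [hz r, hw]
    rw [hL]
    by_cases hM : ∀ r, M r i₀ = 0
    · rw [Matrix.det_eq_zero_of_column_eq_zero i₀ hM]; ring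
    · push_neg at hM
      obtain ⟨r, hr⟩ := hM
      have hsr : s r = 0 := by
        rcases mul_eq_zero.mp (hz r) with h' | h'
        · exact h'
        · exact absurd h' hr
      rw [Finset.prod_eq_zero (Finset.mem_univ r) hsr]; ring
  · have hA : (Matrix.of fun r c => s r * M r c + M r i₀ * w c) =
        Matrix.diagonal s * M *
          (1 + Matrix.replicateCol Unit (Pi.single i₀ (1:ℝ)) * Matrix.replicateRow Unit (a⁻¹ • w)) := by
      ext r c
      have hterm : ∀ k, (Matrix.diagonal s * M) r k *
          ((1 : Matrix ι ι ℝ)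
            + Matrix.replicateCol Unit (Pi.single i₀ (1:ℝ)) * Matrix.replicateRow Unit (a⁻¹ • w)) k c
          = (if k = c then s r * M r c else 0)
            + (if k = i₀ then s r * M r i₀ * (a⁻¹ * w c) else 0) := by
        intro k
        rw [Matrix.diagonal_mul]
        simp only [Matrix.add_apply, Matrix.mul_apply, Matrix.one_apply, Matrix.replicateCol_apply,
          Matrix.replicateRow_apply, Pi.smul_apply, smul_eq_mul, Finset.univ_unique, Finset.sum_const,
          Finset.card_singleton, one_smul, Pi.single_apply]
        rcases eq_or_ne k c with rfl | h1 <;> rcases eq_or_ne k i₀ with rfl | h2 <;>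
            simp_all <;> ring
      rw [Matrix.mul_apply, Finset.sum_congr rfl fun k _ => hterm k, Finset.sum_add_distrib,
        Finset.sum_ite_eq', Finset.sum_ite_eq']
      simp only [Finset.mem_univ, if_true, Matrix.of_apply]
      rw [show s r * M r i₀ * (a⁻¹ * w c) = a⁻¹ * (s r * M r i₀) * w c by ring, hs r]
      field_simp
    rw [hA, Matrix.det_mul, Matrix.det_mul, Matrix.det_diagonal,
      Matrix.det_one_add_replicateCol_mul_replicateRow]
    simp [hw]


/-- `⟨D₁Φ(y), z⟩ = det [[0, ∂φ(y)],[z, ∂Φ(y)]]`, a `(d+1)×(d+1)` determinant with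
`m + n = d + 1` (`φ` has `m = d − n + 1` components). -/
noncomputable def D1 {d n m : ℕ} (h : m + n = d + 1)
    (Φ : (Fin d → ℝ) → Fin n → ℝ) (φ : (Fin d → ℝ) → Fin m → ℝ)
    (y : Fin d → ℝ) (z : Fin n → ℝ) : ℝ :=
  Matrix.det (Matrix.of fun (r c : Fin (d + 1)) =>
    Fin.addCases (motive := fun _ => ℝ)
      (fun i : Fin m =>
        Fin.cases (0 : ℝ)
          (fun j : Fin d => fderiv ℝ (fun y' => φ y' i) y (Pi.single j 1)) c)
      (fun i : Fin n =>
        Fin.cases (z i)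
          (fun j : Fin d => fderiv ℝ (fun y' => Φ y' i) y (Pi.single j 1)) c)
      (Fin.cast h.symm r))

/-- Homogeneity of the weight `W¹(Φ,φ)(y) := ⟨D₁Φ(y), Φ(y)⟩`:
`W¹(fΦ, φ)(y) = f(y)ⁿ · W¹(Φ, φ)(y)` for `C¹` scalar `f`. -/
theorem stmt_9 (d n m : ℕ) (h : m + n = d + 1)
    (U : Set (Fin d → ℝ)) (hU : IsOpen U)
    (f : (Fin d → ℝ) → ℝ)
    (Φ : (Fin d → ℝ) → Fin n → ℝ) (φ : (Fin d → ℝ) → Fin m → ℝ)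
    (hf : ∀ y ∈ U, DifferentiableAt ℝ f y)
    (hΦ : ∀ y ∈ U, ∀ i, DifferentiableAt ℝ (fun y' => Φ y' i) y)
    (hφ : ∀ y ∈ U, ∀ i, DifferentiableAt ℝ (fun y' => φ y' i) y) :
    ∀ y ∈ U,
      D1 h (fun y' => f y' • Φ y') φ y (f y • Φ y) = (f y) ^ n * D1 h Φ φ y (Φ y) := by
  intro y hy
  classical
  set M : Matrix (Fin (d+1)) (Fin (d+1)) ℝ := Matrix.of fun (r c : Fin (d + 1)) =>
    Fin.addCases (motive := fun _ => ℝ)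
      (fun i : Fin m =>
        Fin.cases (0 : ℝ)
          (fun j : Fin d => fderiv ℝ (fun y' => φ y' i) y (Pi.single j 1)) c)
      (fun i : Fin n =>
        Fin.cases (Φ y i)
          (fun j : Fin d => fderiv ℝ (fun y' => Φ y' i) y (Pi.single j 1)) c)
      (Fin.cast h.symm r) with hMdef
  set s : Fin (d+1) → ℝ := fun r =>
    Fin.addCases (motive := fun _ => ℝ) (fun _ => (1:ℝ)) (fun _ => f y)
      (Fin.cast h.symm r) with hsdef
  set w : Fin (d+1) → ℝ := fun c =>
    Fin.cases (motive := fun _ => ℝ) (0:ℝ)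
      (fun j : Fin d => fderiv ℝ f y (Pi.single j 1)) c with hwdef
  have hw0 : w 0 = 0 := rfl
  have hcol : ∀ r : Fin (d+1), M r 0 =
      Fin.addCases (motive := fun _ => ℝ) (fun _ => 0) (fun i => Φ y i)
        (Fin.cast h.symm r) := by
    intro r
    obtain ⟨r', rfl⟩ : ∃ r', Fin.cast h r' = r := ⟨Fin.cast h.symm r, rfl⟩
    simp only [hMdef, Matrix.of_apply, Fin.cast_cast, Fin.cast_eq_self]
    induction r' using Fin.addCases with
    | left i => simp
    | right i => simp
  have hs : ∀ r, s r * M r 0 = f y * M r 0 := by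
    intro r
    obtain ⟨r', rfl⟩ : ∃ r', Fin.cast h r' = r := ⟨Fin.cast h.symm r, rfl⟩
    rw [hcol]
    simp only [hsdef, Fin.cast_cast, Fin.cast_eq_self]
    induction r' using Fin.addCases with
    | left i => simp
    | right i => simp
  have hmat : (Matrix.of fun (r c : Fin (d + 1)) =>
      Fin.addCases (motive := fun _ => ℝ)
        (fun i : Fin m =>
          Fin.cases (0 : ℝ)
            (fun j : Fin d => fderiv ℝ (fun y' => φ y' i) y (Pi.single j 1)) c)
        (fun i : Fin n =>
          Fin.cases ((f y • Φ y) i)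
            (fun j : Fin d =>
              fderiv ℝ (fun y' => (f y' • Φ y') i) y (Pi.single j 1)) c)
        (Fin.cast h.symm r))
      = Matrix.of fun r c => s r * M r c + M r 0 * w c := by
    ext r c
    obtain ⟨r', rfl⟩ : ∃ r', Fin.cast h r' = r := ⟨Fin.cast h.symm r, rfl⟩
    rw [Matrix.of_apply, Matrix.of_apply, hcol]
    simp only [hMdef, hsdef, Matrix.of_apply, Fin.cast_cast, Fin.cast_eq_self]
    induction r' using Fin.addCases with
    | left i =>
      simp only [Fin.addCases_left]
      induction c using Fin.cases with
      | zero => simp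
      | succ j => simp
    | right i =>
      simp only [Fin.addCases_right]
      induction c using Fin.cases with
      | zero => simp [hwdef, mul_comm]
      | succ j =>
        simp only [Fin.cases_succ, hwdef]
        have hd : fderiv ℝ (fun y' => (f y' • Φ y') i) y =
            f y • fderiv ℝ (fun y' => Φ y' i) y + Φ y i • fderiv ℝ f y := by
          have : (fun y' => (f y' • Φ y') i) = fun y' => f y' * Φ y' i := rfl
          rw [this, fderiv_fun_mul (hf y hy) (hΦ y hy i)]
        rw [hd]
        simp
  have hprod : (∏ r, s r) = (f y) ^ n := by
    have h1 : (∏ r, s r) = ∏ r' : Fin (m + n),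
        Fin.addCases (motive := fun _ => ℝ) (fun _ => (1:ℝ)) (fun _ => f y) r' := by
      refine Fintype.prod_equiv (finCongr h.symm) _ _ fun x => ?_
      simp [hsdef]
    rw [h1, Fin.prod_univ_add]
    simp [Finset.prod_const]
  show (Matrix.of _).det = _
  rw [hmat, key_det M 0 (f y) s w hw0 hs, hprod]
  rw [hMdef]; rfl
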